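/- Consider the BiCOR recurrences run for m steps with the coefficient choices α_j = ⟨r_j^*, A r_j⟩ / ⟨A^T p_j^*, A p_j⟩ and β_j = ⟨r_{j+1}^*, A r_{j+1}⟩ / ⟨r_j^*, A r_j⟩, and assume no breakdown occurs before step m, i.e. ⟨r_j^*, A r_j⟩ ≠ 0 and ⟨A^T p_j^*, A p_j⟩ ≠ 0 for all j ≤ m. Then for all 0 ≤ i, j ≤ m with i ≠ j: the residuals and shadow residuals are biconjugate A-orthogonal, ⟨r_j^*, A r_i⟩ = 0, and the search directions and shadow search directions are A²-biconjugate, ⟨A^T p_j^*, A p_i⟩ = 0. -/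
import Mathlib


open Matrix

/-- If the BiCOR recurrences are run for `m` steps with the standard coefficient
choices and no breakdown occurs, then for all `i ≠ j` (both at most `m`) the
residuals and shadow residuals are biconjugate A-orthogonal, and the search
directions and shadow search directions are A²-biconjugate. -/
theorem bicor_biorthogonality {n m : ℕ} (A : Matrix (Fin n) (Fin n) ℝ)
    (r p rs ps : ℕ → Fin n → ℝ) (alpha beta : ℕ → ℝ)
    (hp0 : p 0 = r 0) (hps0 : ps 0 = rs 0)
    (hr : ∀ j, r (j + 1) = r j - alpha j • (A *ᵥ p j))
    (hp : ∀ j, p (j + 1) = r (j + 1) + beta j • p j)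
    (hrs : ∀ j, rs (j + 1) = rs j - alpha j • (Aᵀ *ᵥ ps j))
    (hps : ∀ j, ps (j + 1) = rs (j + 1) + beta j • ps j)
    (halpha : ∀ j ≤ m, alpha j = (rs j ⬝ᵥ (A *ᵥ r j)) / ((Aᵀ *ᵥ ps j) ⬝ᵥ (A *ᵥ p j)))
    (hbeta : ∀ j ≤ m, beta j = (rs (j + 1) ⬝ᵥ (A *ᵥ r (j + 1))) / (rs j ⬝ᵥ (A *ᵥ r j)))
    (hnum : ∀ j ≤ m, rs j ⬝ᵥ (A *ᵥ r j) ≠ 0)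
    (hden : ∀ j ≤ m, (Aᵀ *ᵥ ps j) ⬝ᵥ (A *ᵥ p j) ≠ 0) :
    ∀ i j, i ≤ m → j ≤ m → i ≠ j →
      rs j ⬝ᵥ (A *ᵥ r i) = 0 ∧ (Aᵀ *ᵥ ps j) ⬝ᵥ (A *ᵥ p i) = 0 := by
  -- adjoint property of the bilinear form B(u,v) = u ⬝ᵥ (A *ᵥ v)
  have hadj : ∀ u v : Fin n → ℝ, (Aᵀ *ᵥ u) ⬝ᵥ v = u ⬝ᵥ (A *ᵥ v) := by
    intro u v
    rw [Matrix.mulVec_transpose, ← Matrix.dotProduct_mulVec]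
  -- the four families of bilinear quantities
  set F : ℕ → ℕ → ℝ := fun i j => rs j ⬝ᵥ (A *ᵥ r i) with hFdef
  set G : ℕ → ℕ → ℝ := fun i j => ps j ⬝ᵥ (A *ᵥ (A *ᵥ p i)) with hGdef
  set M : ℕ → ℕ → ℝ := fun i j => ps j ⬝ᵥ (A *ᵥ (A *ᵥ r i)) with hMdef
  set N : ℕ → ℕ → ℝ := fun i j => rs j ⬝ᵥ (A *ᵥ (A *ᵥ p i)) with hNdef
  -- recurrences for F in its first argument
  have hFrec : ∀ i j, F (i + 1) j = F i j - alpha i * N i j := by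
    intro i j
    simp only [hFdef, hNdef, hr i]
    simp [Matrix.mulVec_sub, Matrix.mulVec_smul, dotProduct_sub,
      dotProduct_smul, mul_comm]
  -- recurrences for F in its second argument
  have hFrec2 : ∀ i j, F i (j + 1) = F i j - alpha j * M i j := by
    intro i j
    simp only [hFdef, hMdef, hrs j]
    rw [sub_dotProduct, smul_dotProduct, hadj]
    simp [smul_eq_mul]
  -- recurrences for G
  have hGrecL : ∀ i j, G (i + 1) j = M (i + 1) j + beta i * G i j := by
    intro i j
    simp only [hGdef, hMdef, hp i]
    simp [Matrix.mulVec_add, Matrix.mulVec_smul, dotProduct_add,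
      dotProduct_smul, mul_comm]
  have hGrecR : ∀ i j, G i (j + 1) = N i (j + 1) + beta j * G i j := by
    intro i j
    simp only [hGdef, hNdef, hps j]
    simp [add_dotProduct, smul_dotProduct, mul_comm]
  -- structural relations: M in terms of G (via r = p - β p), N in terms of G (via rs = ps - β ps)
  have hMs0 : ∀ j, M 0 j = G 0 j := by
    intro j; simp only [hMdef, hGdef, hp0]
  have hMs : ∀ i j, M (i + 1) j = G (i + 1) j - beta i * G i j := by
    intro i j
    have : r (i + 1) = p (i + 1) - beta i • p i := by rw [hp i]; abel
    simp only [hMdef, hGdef, this]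
    simp [Matrix.mulVec_sub, Matrix.mulVec_smul, dotProduct_sub,
      dotProduct_smul, mul_comm]
  have hNs0 : ∀ i, N i 0 = G i 0 := by
    intro i; simp only [hNdef, hGdef, hps0]
  have hNs : ∀ i j, N i (j + 1) = G i (j + 1) - beta j * G i j := by
    intro i j
    have : rs (j + 1) = ps (j + 1) - beta j • ps j := by rw [hps j]; abel
    simp only [hNdef, hGdef, this]
    simp [sub_dotProduct, smul_dotProduct, mul_comm]
  -- coefficient formulas in terms of F and G
  have hdenG : ∀ j ≤ m, G j j ≠ 0 := by
    intro j hj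
    have := hden j hj
    rwa [hadj] at this
  have hnumF : ∀ j ≤ m, F j j ≠ 0 := fun j hj => hnum j hj
  have halphaG : ∀ j ≤ m, alpha j = F j j / G j j := by
    intro j hj
    rw [halpha j hj, hadj]
  have hbetaF : ∀ j ≤ m, beta j = F (j + 1) (j + 1) / F j j := fun j hj => hbeta j hj
  have halpha_ne : ∀ j ≤ m, alpha j ≠ 0 := by
    intro j hj
    rw [halphaG j hj]
    exact div_ne_zero (hnumF j hj) (hdenG j hj)
  have halphaG' : ∀ j ≤ m, alpha j * G j j = F j j := by
    intro j hj
    rw [halphaG j hj, div_mul_cancel₀ _ (hdenG j hj)]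
  have hbetaF' : ∀ j ≤ m, beta j * F j j = F (j + 1) (j + 1) := by
    intro j hj
    rw [hbetaF j hj, div_mul_cancel₀ _ (hnumF j hj)]
  -- main induction
  have key : ∀ k ≤ m, ∀ i j, i < j → j ≤ k →
      F i j = 0 ∧ F j i = 0 ∧ G i j = 0 ∧ G j i = 0 := by
    intro k
    induction k with
    | zero => intro _ i j hij hj; omega
    | succ k ih =>
      intro hk1
      have hkm : k ≤ m := le_trans (Nat.le_succ k) hk1
      have IH := ih hkm
      -- mixed zeros from IH
      have hM0 : ∀ i j, i < j → j ≤ k → M i j = 0 := by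
        intro i j hij hj
        cases i with
        | zero => rw [hMs0]; exact (IH 0 j hij hj).2.2.1
        | succ i' =>
          rw [hMs]
          rw [(IH (i' + 1) j hij hj).2.2.1,
            (IH i' j (lt_trans (Nat.lt_succ_self i') hij) hj).2.2.1]
          ring
      have hN0 : ∀ i j, i < j → j ≤ k → N j i = 0 := by
        intro i j hij hj
        cases i with
        | zero => rw [hNs0]; exact (IH 0 j hij hj).2.2.2
        | succ i' =>
          rw [hNs]
          rw [(IH (i' + 1) j hij hj).2.2.2,
            (IH i' j (lt_trans (Nat.lt_succ_self i') hij) hj).2.2.2]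
          ring
      -- diagonal identities
      have hMd : M k k = G k k := by
        cases k with
        | zero => exact hMs0 0
        | succ k' =>
          rw [hMs, (IH k' (k' + 1) (Nat.lt_succ_self k') le_rfl).2.2.1]
          ring
      have hNd : N k k = G k k := by
        cases k with
        | zero => exact hNs0 0
        | succ k' =>
          rw [hNs, (IH k' (k' + 1) (Nat.lt_succ_self k') le_rfl).2.2.2]
          ring
      -- step (a): F (k+1) i = 0 for i ≤ k
      have A1 : ∀ i ≤ k, F (k + 1) i = 0 := by
        intro i hi
        rw [hFrec k i]
        rcases Nat.lt_or_ge i k with hik | hik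
        · rw [(IH i k hik le_rfl).2.1, hN0 i k hik le_rfl]; ring
        · have hike : i = k := le_antisymm hi hik
          subst hike
          rw [hNd, halphaG' i hkm]; ring
      -- step (b): F i (k+1) = 0 for i ≤ k
      have A2 : ∀ i ≤ k, F i (k + 1) = 0 := by
        intro i hi
        rw [hFrec2 i k]
        rcases Nat.lt_or_ge i k with hik | hik
        · rw [(IH i k hik le_rfl).1, hM0 i k hik le_rfl]; ring
        · have hike : i = k := le_antisymm hi hik
          subst hike
          rw [hMd, halphaG' i hkm]; ring
      -- step (c): G (k+1) i = 0 for i ≤ k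
      have A3 : ∀ i ≤ k, G (k + 1) i = 0 := by
        intro i hi
        have him : i ≤ m := le_trans hi hkm
        have hMdec : alpha i * M (k + 1) i = F (k + 1) i - F (k + 1) (i + 1) := by
          rw [hFrec2 (k + 1) i]; ring
        rw [hGrecL k i]
        rcases Nat.lt_or_ge i k with hik | hik
        · have hz : alpha i * M (k + 1) i = 0 := by
            rw [hMdec, A1 i hi, A1 (i + 1) hik]; ring
          have hMz : M (k + 1) i = 0 :=
            (mul_eq_zero.mp hz).resolve_left (halpha_ne i him)
          rw [hMz, (IH i k hik le_rfl).2.2.2]; ring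
        · have hike : i = k := le_antisymm hi hik
          subst hike
          have hane := halpha_ne i hkm
          have hcalc : alpha i * (M (i + 1) i + beta i * G i i) = 0 := by
            have h1 : F (i + 1) i = 0 := A1 i hi
            have h2 : beta i * F i i = F (i + 1) (i + 1) := hbetaF' i hkm
            have h3 : alpha i * G i i = F i i := halphaG' i hkm
            calc alpha i * (M (i + 1) i + beta i * G i i)
                = (alpha i * M (i + 1) i) + beta i * (alpha i * G i i) := by ring
              _ = (F (i + 1) i - F (i + 1) (i + 1)) + beta i * F i i := by rw [hMdec, h3]
              _ = 0 := by rw [h1, h2]; ring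
          exact (mul_eq_zero.mp hcalc).resolve_left hane
      -- step (d): G i (k+1) = 0 for i ≤ k
      have A4 : ∀ i ≤ k, G i (k + 1) = 0 := by
        intro i hi
        have him : i ≤ m := le_trans hi hkm
        have hNdec : alpha i * N i (k + 1) = F i (k + 1) - F (i + 1) (k + 1) := by
          rw [hFrec i (k + 1)]; ring
        rw [hGrecR i k]
        rcases Nat.lt_or_ge i k with hik | hik
        · have hz : alpha i * N i (k + 1) = 0 := by
            rw [hNdec, A2 i hi, A2 (i + 1) hik]; ring
          have hNz : N i (k + 1) = 0 :=
            (mul_eq_zero.mp hz).resolve_left (halpha_ne i him)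
          rw [hNz, (IH i k hik le_rfl).2.2.1]; ring
        · have hike : i = k := le_antisymm hi hik
          subst hike
          have hane := halpha_ne i hkm
          have hcalc : alpha i * (N i (i + 1) + beta i * G i i) = 0 := by
            have h1 : F i (i + 1) = 0 := A2 i hi
            have h2 : beta i * F i i = F (i + 1) (i + 1) := hbetaF' i hkm
            have h3 : alpha i * G i i = F i i := halphaG' i hkm
            calc alpha i * (N i (i + 1) + beta i * G i i)
                = (alpha i * N i (i + 1)) + beta i * (alpha i * G i i) := by ring
              _ = (F i (i + 1) - F (i + 1) (i + 1)) + beta i * F i i := by rw [hNdec, h3]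
              _ = 0 := by rw [h1, h2]; ring
          exact (mul_eq_zero.mp hcalc).resolve_left hane
      -- combine
      intro i j hij hj
      rcases Nat.lt_or_ge j (k + 1) with hjk | hjk
      · exact IH i j hij (Nat.lt_succ_iff.mp hjk)
      · have hje : j = k + 1 := le_antisymm hj hjk
        subst hje
        have hik : i ≤ k := Nat.lt_succ_iff.mp hij
        exact ⟨A2 i hik, A1 i hik, A4 i hik, A3 i hik⟩
  -- conclude
  intro i j hi hj hij
  have hgoal2 : (Aᵀ *ᵥ ps j) ⬝ᵥ (A *ᵥ p i) = G i j := by rw [hadj]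
  rcases Nat.lt_or_ge i j with h | h
  · have := key m le_rfl i j h hj
    exact ⟨this.1, by rw [hgoal2]; exact this.2.2.1⟩
  · have hji : j < i := lt_of_le_of_ne h (Ne.symm hij)
    have := key m le_rfl j i hji hi
    exact ⟨this.2.1, by rw [hgoal2]; exact this.2.2.2⟩
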